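/- Consider the process on a multiset Q₀ of n tokens (and empty Q₁,…,Q_t): in each round, for every i, repeatedly remove pairs of tokens from Qᵢ and add one token to Q_{i+1} as long as |Qᵢ| ≥ 3 (each application removes 2 tokens from Qᵢ and adds 1 to Q_{i+1}). Then each round in which some |Qᵢ| ≥ 3 reduces the total number of tokens Σᵢ|Qᵢ| by at least (Σᵢ|Qᵢ| − 2(t+1))/3, and the process reaches a state with all |Qᵢ| ≤ 2 after O(log n) rounds. -/

import Mathlib

/-- Residual size of a level after repeatedly applying full adders (each removes
2 tokens) while the size is at least 3: the result is 1 or 2 if s ≥ 3, else s. -/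
def residue (s : ℕ) : ℕ := if s ≤ 2 then s else if Even s then 2 else 1

/-- The number of carry tokens a level of size s sends to the next level. -/
def carries (s : ℕ) : ℕ := (s - residue s) / 2

/-- One round of the almost-counting process on levels Q₀,…,Q_t (sizes `q i`):
every level i < t is reduced to its residue, carries are added to the next level;
the top level t only receives carries. -/
def roundStep (t : ℕ) (q : ℕ → ℕ) : ℕ → ℕ := fun i =>
  if i = 0 then residue (q 0)
  else if i < t then residue (q i) + carries (q (i - 1))
  else if i = t then q t + carries (q (t - 1))
  else q i

lemma residue_le_two (s : ℕ) : residue s ≤ 2 := by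
  unfold residue; split_ifs <;> omega

lemma residue_pos (s : ℕ) (h : 1 ≤ s) : 1 ≤ residue s := by
  unfold residue; split_ifs <;> omega

lemma two_carries (s : ℕ) : 2 * carries s + residue s = s := by
  unfold carries residue
  split_ifs with h1 h2
  · omega
  · rw [Nat.even_iff] at h2; omega
  · rw [Nat.even_iff] at h2; omega

lemma carries_le (s : ℕ) : carries s ≤ s - 2 := by
  have h1 := two_carries s
  have h2 := residue_le_two s
  rcases Nat.eq_zero_or_pos s with rfl | hs
  · omega
  · have h3 := residue_pos s hs; omega

lemma rs_zero (s : ℕ) (q : ℕ → ℕ) : roundStep (s+1) q 0 = residue (q 0) := by simp [roundStep]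

lemma rs_top (s : ℕ) (q : ℕ → ℕ) : roundStep (s+1) q (s+1) = q (s+1) + carries (q s) := by
  simp [roundStep]

lemma rs_mid (s : ℕ) (q : ℕ → ℕ) (i : ℕ) (hi : i < s) :
    roundStep (s+1) q (i+1) = residue (q (i+1)) + carries (q i) := by
  simp [roundStep, Nat.succ_lt_succ hi]

lemma sum_roundStep (s : ℕ) (q : ℕ → ℕ) :
    ∑ i ∈ Finset.range (s + 2), roundStep (s+1) q i
      = (∑ i ∈ Finset.range (s+1), (residue (q i) + carries (q i))) + q (s+1) := by
  rw [show s + 2 = (s+1) + 1 from rfl, Finset.sum_range_succ, rs_top,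
    Finset.sum_range_succ', rs_zero]
  have h1 : ∀ i ∈ Finset.range s, roundStep (s+1) q (i+1) = residue (q (i+1)) + carries (q i) := by
    intro i hi; exact rs_mid s q i (Finset.mem_range.mp hi)
  rw [Finset.sum_congr rfl h1, Finset.sum_add_distrib, Finset.sum_add_distrib,
    Finset.sum_range_succ (fun i => carries (q i)) s,
    Finset.sum_range_succ' (fun i => residue (q i)) s]
  omega

lemma weight_roundStep (s : ℕ) (q : ℕ → ℕ) :
    ∑ i ∈ Finset.range (s + 2), roundStep (s+1) q i * 2^i
      = ∑ i ∈ Finset.range (s + 2), q i * 2^i := by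
  have key : ∀ f : ℕ → ℕ, (∀ i, f i = q i) → True := fun _ _ => trivial
  rw [show s + 2 = (s+1) + 1 from rfl, Finset.sum_range_succ, rs_top,
    Finset.sum_range_succ', rs_zero,
    Finset.sum_range_succ (fun i => q i * 2^i) (s+1)]
  have h1 : ∀ i ∈ Finset.range s, roundStep (s+1) q (i+1) * 2^(i+1)
      = residue (q (i+1)) * 2^(i+1) + carries (q i) * 2^(i+1) := by
    intro i hi; rw [rs_mid s q i (Finset.mem_range.mp hi)]; ring
  rw [Finset.sum_congr rfl h1, Finset.sum_add_distrib]
  have h2 : ∑ i ∈ Finset.range (s+1), q i * 2^i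
      = ∑ i ∈ Finset.range (s+1), (residue (q i) * 2^i + carries (q i) * (2 * 2^i)) := by
    apply Finset.sum_congr rfl
    intro i _
    have h := two_carries (q i); conv_lhs => rw [← h]
    ring
  rw [h2, Finset.sum_add_distrib,
    Finset.sum_range_succ' (fun i => residue (q i) * 2^i) s,
    Finset.sum_range_succ (fun i => carries (q i) * (2 * 2^i)) s]
  have e1 : ∀ i ∈ Finset.range s, carries (q i) * 2^(i+1) = carries (q i) * (2 * 2^i) := by
    intro i _; ring
  rw [Finset.sum_congr rfl e1]
  ring

lemma step_sum_le (s : ℕ) (q : ℕ → ℕ) (hq : q (s+1) ≤ 2) :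
    3 * ∑ i ∈ Finset.range (s+2), roundStep (s+1) q i
      ≤ 2 * (∑ i ∈ Finset.range (s+2), q i) + 2 * (s+2) := by
  rw [sum_roundStep, show s + 2 = (s+1)+1 from rfl, Finset.sum_range_succ q (s+1)]
  have key : ∑ i ∈ Finset.range (s+1), 3 * (residue (q i) + carries (q i))
      ≤ ∑ i ∈ Finset.range (s+1), (2 * q i + 2) := by
    apply Finset.sum_le_sum
    intro i _
    have h1 := two_carries (q i)
    have h2 := residue_le_two (q i)
    omega
  have L : ∑ i ∈ Finset.range (s+1), 3 * (residue (q i) + carries (q i))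
      = 3 * ∑ i ∈ Finset.range (s+1), (residue (q i) + carries (q i)) := by
    rw [Finset.mul_sum]
  have R : ∑ i ∈ Finset.range (s+1), (2 * q i + 2)
      = 2 * (∑ i ∈ Finset.range (s+1), q i) + 2 * (s+1) := by
    rw [Finset.sum_add_distrib, ← Finset.mul_sum, Finset.sum_const, Finset.card_range,
      smul_eq_mul]
    ring
  rw [L, R] at key
  omega

lemma phi_half (s : ℕ) (q : ℕ → ℕ) :
    2 * ∑ i ∈ Finset.range (s+1), (roundStep (s+1) q i - 2) * 2^(s - i)
      ≤ ∑ i ∈ Finset.range (s+1), (q i - 2) * 2^(s - i) := by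
  rw [Finset.sum_range_succ' (fun i => (roundStep (s+1) q i - 2) * 2^(s-i)) s]
  simp only [rs_zero]
  have hz : (residue (q 0) - 2) * 2^(s-0) = 0 := by
    have := residue_le_two (q 0); simp [Nat.sub_eq_zero_of_le this]
  rw [hz, add_zero, Finset.mul_sum]
  calc ∑ i ∈ Finset.range s, 2 * ((roundStep (s+1) q (i+1) - 2) * 2^(s-(i+1)))
      ≤ ∑ i ∈ Finset.range s, (q i - 2) * 2^(s-i) := by
        apply Finset.sum_le_sum
        intro i hi
        have hi' := Finset.mem_range.mp hi
        rw [rs_mid s q i hi']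
        have h1 : residue (q (i+1)) + carries (q i) - 2 ≤ carries (q i) := by
          have := residue_le_two (q (i+1)); omega
        have h2 : carries (q i) ≤ q i - 2 := carries_le (q i)
        have hpow : 2 * 2^(s-(i+1)) = 2^(s-i) := by
          rw [← pow_succ']
          congr 1
          omega
        calc 2 * ((residue (q (i+1)) + carries (q i) - 2) * 2^(s-(i+1)))
            = (residue (q (i+1)) + carries (q i) - 2) * (2 * 2^(s-(i+1))) := by ring
          _ = (residue (q (i+1)) + carries (q i) - 2) * 2^(s-i) := by rw [hpow]
          _ ≤ (q i - 2) * 2^(s-i) := Nat.mul_le_mul_right _ (le_trans h1 h2)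
    _ ≤ ∑ i ∈ Finset.range (s+1), (q i - 2) * 2^(s-i) :=
        Finset.sum_le_sum_of_subset (Finset.range_subset_range.mpr (Nat.le_succ s))

/-- starting from n tokens in Q₀, each round in which some level has
≥ 3 tokens reduces the total token count by at least (total − 2(t+1))/3, and all
levels have ≤ 2 tokens after O(log n) rounds. -/
theorem almost_counting_rounds :
    ∃ C : ℕ, 0 < C ∧ ∀ n : ℕ, 1 ≤ n →
      ∀ t : ℕ, t = Nat.clog 2 (n + 1) - 1 →
        ∀ init : ℕ → ℕ, (init 0 = n ∧ ∀ i, 0 < i → init i = 0) →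
          (∀ r : ℕ,
            (∃ i ≤ t, 3 ≤ (roundStep t)^[r] init i) →
              ((∑ i ∈ Finset.range (t + 1), ((roundStep t)^[r] init i : ℚ)) - 2 * (t + 1)) / 3 ≤
                (∑ i ∈ Finset.range (t + 1), ((roundStep t)^[r] init i : ℚ)) -
                  ∑ i ∈ Finset.range (t + 1), ((roundStep t)^[r + 1] init i : ℚ)) ∧
          ∀ i ≤ t, (roundStep t)^[C * (Nat.log 2 n + 1)] init i ≤ 2 := by
  refine ⟨2, by norm_num, ?_⟩
  rintro n hn t ht init ⟨h0, hpos⟩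
  rcases Nat.lt_or_ge n 2 with hn2 | hn2
  · -- n = 1, hence t = 0
    have hn1 : n = 1 := by omega
    subst hn1
    have ht0 : t = 0 := by
      have h1 : 2 ^ (Nat.clog 2 (1+1) - 1) < 2 :=
        Nat.pow_pred_clog_lt_self (b := 2) (x := 1+1) (by norm_num) (by norm_num)
      have h2 : Nat.clog 2 (1+1) - 1 = 0 := by
        by_contra h
        have : 2 ^ 1 ≤ 2 ^ (Nat.clog 2 (1+1) - 1) := Nat.pow_le_pow_right (by norm_num) (by omega)
        omega
      omega
    subst ht0
    have hval : ∀ r, ∀ f : ℕ → ℕ, f 0 = 1 → (roundStep 0)^[r] f 0 = 1 := by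
      intro r
      induction r with
      | zero => intro f hf; simpa using hf
      | succ r ih =>
        intro f hf
        rw [Function.iterate_succ_apply]
        exact ih _ (by simp [roundStep, hf, residue])
    refine ⟨?_, ?_⟩
    · intro r _
      norm_num [Finset.sum_range_one, hval _ init h0,
        hval _ (roundStep 0 init) (by simp [roundStep, h0, residue])]
    · intro i hi
      interval_cases i
      rw [hval _ init h0]
      norm_num
  · -- n ≥ 2, t ≥ 1
    have ht1 : 1 ≤ t := by
      have h1 : 1 < Nat.clog 2 (n+1) := by
        rw [Nat.lt_clog_iff_pow_lt (by norm_num)]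
        omega
      omega
    obtain ⟨s, rfl⟩ : ∃ s, t = s + 1 := ⟨t - 1, by omega⟩
    have hpow1 : n + 1 ≤ 2 ^ (s + 2) := by
      have h := Nat.le_pow_clog (b := 2) (by norm_num) (n+1)
      have hc : s + 2 = Nat.clog 2 (n+1) := by omega
      rw [hc]; exact h
    have hpow2 : 2 ^ (s + 1) < n + 1 := by
      have h := Nat.pow_pred_clog_lt_self (b := 2) (by norm_num) (x := n+1) (by omega)
      rw [Nat.pred_eq_sub_one] at h
      rwa [← ht] at h
    -- weight invariant
    have hW : ∀ r, ∑ i ∈ Finset.range (s+2), (roundStep (s+1))^[r] init i * 2^i = n := by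
      intro r
      induction r with
      | zero =>
        simp only [Function.iterate_zero, id]
        rw [Finset.sum_range_succ' (fun i => init i * 2^i) (s+1)]
        have hz : ∀ i ∈ Finset.range (s+1), init (i+1) * 2^(i+1) = 0 := by
          intro i _
          rw [hpos (i+1) (by omega)]
          ring
        rw [Finset.sum_congr rfl hz, Finset.sum_const_zero]
        simp [h0]
      | succ r ih =>
        rw [Function.iterate_succ_apply', weight_roundStep]
        exact ih
    have htop : ∀ r, (roundStep (s+1))^[r] init (s+1) ≤ 1 := by
      intro r
      have h1 : (roundStep (s+1))^[r] init (s+1) * 2^(s+1) ≤ n := by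
        rw [← hW r]
        apply Finset.single_le_sum (f := fun i => (roundStep (s+1))^[r] init i * 2^i)
        · intro i _; positivity
        · simp
      by_contra h
      push_neg at h
      have h2 : 2 * 2^(s+1) ≤ (roundStep (s+1))^[r] init (s+1) * 2^(s+1) :=
        Nat.mul_le_mul_right _ (by omega)
      have h3 : 2 * 2^(s+1) = 2^(s+2) := by ring
      omega
    refine ⟨?_, ?_⟩
    · -- part 1
      intro r _
      have key := step_sum_le s ((roundStep (s+1))^[r] init) (by have := htop r; omega)
      have key2 : 3 * ∑ i ∈ Finset.range (s+1+1), (roundStep (s+1))^[r+1] init i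
          ≤ 2 * (∑ i ∈ Finset.range (s+1+1), (roundStep (s+1))^[r] init i) + 2 * (s+1+1) := by
        rw [Function.iterate_succ_apply']
        exact key
      rw [div_le_iff₀ (by norm_num : (0:ℚ) < 3)]
      have keyq : (3:ℚ) * ∑ i ∈ Finset.range (s+1+1), ((roundStep (s+1))^[r+1] init i : ℚ)
          ≤ 2 * (∑ i ∈ Finset.range (s+1+1), ((roundStep (s+1))^[r] init i : ℚ))
            + 2 * ((s:ℚ)+1+1) := by
        exact_mod_cast key2
      push_cast
      linarith
    · -- part 2
      have hphi : ∀ r, 2^r * (∑ i ∈ Finset.range (s+1),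
          ((roundStep (s+1))^[r] init i - 2) * 2^(s-i)) ≤ (n-2) * 2^s := by
        intro r
        induction r with
        | zero =>
          simp only [Function.iterate_zero, id, pow_zero, one_mul]
          rw [Finset.sum_range_succ' (fun i => (init i - 2) * 2^(s-i)) s]
          have hz : ∀ i ∈ Finset.range s, (init (i+1) - 2) * 2^(s-(i+1)) = 0 := by
            intro i _
            rw [hpos (i+1) (by omega)]
            simp
          rw [Finset.sum_congr rfl hz, Finset.sum_const_zero, h0]
          simp
        | succ r ih =>
          have h := phi_half s ((roundStep (s+1))^[r] init)
          calc 2^(r+1) * (∑ i ∈ Finset.range (s+1),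
                ((roundStep (s+1))^[r+1] init i - 2) * 2^(s-i))
              = 2^r * (2 * ∑ i ∈ Finset.range (s+1),
                (roundStep (s+1) ((roundStep (s+1))^[r] init) i - 2) * 2^(s-i)) := by
                rw [Function.iterate_succ_apply']; ring
            _ ≤ 2^r * (∑ i ∈ Finset.range (s+1),
                ((roundStep (s+1))^[r] init i - 2) * 2^(s-i)) := Nat.mul_le_mul_left _ h
            _ ≤ (n-2) * 2^s := ih
      have hlog : n < 2^(Nat.log 2 n + 1) := Nat.lt_pow_succ_log_self (by norm_num) n
      have h2s : 2^s ≤ n := by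
        have : 2^s ≤ 2^(s+1) := Nat.pow_le_pow_right (by norm_num) (by omega)
        omega
      have hnn : (n-2) * 2^s ≤ n * n := Nat.mul_le_mul (by omega) h2s
      have hR : n * n < 2^(2 * (Nat.log 2 n + 1)) := by
        have he : 2^(2 * (Nat.log 2 n + 1))
            = 2^(Nat.log 2 n + 1) * 2^(Nat.log 2 n + 1) := by
          rw [show 2 * (Nat.log 2 n + 1) = (Nat.log 2 n + 1) + (Nat.log 2 n + 1) by ring,
            pow_add]
        rw [he]
        exact Nat.mul_lt_mul'' hlog hlog
      have hzero : ∑ i ∈ Finset.range (s+1),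
          ((roundStep (s+1))^[2 * (Nat.log 2 n + 1)] init i - 2) * 2^(s-i) = 0 := by
        have h1 := hphi (2 * (Nat.log 2 n + 1))
        by_contra h
        have h2 : 1 ≤ ∑ i ∈ Finset.range (s+1),
            ((roundStep (s+1))^[2 * (Nat.log 2 n + 1)] init i - 2) * 2^(s-i) := by omega
        have h3 : 2^(2 * (Nat.log 2 n + 1)) * 1 ≤ 2^(2 * (Nat.log 2 n + 1))
            * ∑ i ∈ Finset.range (s+1),
              ((roundStep (s+1))^[2 * (Nat.log 2 n + 1)] init i - 2) * 2^(s-i) :=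
          Nat.mul_le_mul_left _ h2
        omega
      intro i hi
      rcases Nat.lt_or_ge i (s+1) with h | h
      · have hterm := (Finset.sum_eq_zero_iff.mp hzero) i (Finset.mem_range.mpr h)
        have hp : 0 < 2^(s-i) := Nat.pow_pos (by norm_num)
        rcases Nat.mul_eq_zero.mp hterm with h' | h'
        · omega
        · omega
      · have hieq : i = s + 1 := by omega
        subst hieq
        have := htop (2 * (Nat.log 2 n + 1))
        omega
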